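/- arXiv:0901.4829 — 3 statements merged into one kernel-verified Lean document; each statement's English description precedes it below -/
import Mathlib

section
/- (Pohozaev identity) Let n ≥ 1 be a natural number and let u : (0,∞) → ℝ be twice differentiable with u(r) > 0 for all r > 0, satisfying u''(r) + ((n-1)/r) u'(r) + f(u(r)) = 0 for all r > 0. Define P(r) = r^n (u'(r)² + 2F(u(r))) + (n-2) r^{n-1} u(r) u'(r). Then P is differentiable on (0,∞) and P'(r) = r^{n-1} Σ(u(r)) for all r > 0. -/
/-- The double power nonlinearity `f(u) = -ω u + u^p - u^q`. -/
noncomputable def f (ω p q u : ℝ) : ℝ := -ω * u + u ^ p - u ^ q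

/-- The primitive `F(u) = -(ω/2)u² + u^{p+1}/(p+1) - u^{q+1}/(q+1)`. -/
noncomputable def F (ω p q u : ℝ) : ℝ :=
  -(ω / 2) * u ^ 2 + u ^ (p + 1) / (p + 1) - u ^ (q + 1) / (q + 1)

/-- The Pohozaev polynomial `Σ(u) = 2nF(u) - (n-2)u f(u)`. -/
noncomputable def Sig (n : ℕ) (ω p q u : ℝ) : ℝ :=
  2 * n * F ω p q u - ((n : ℝ) - 2) * u * f ω p q u

/-- The Pohozaev function `P(r) = rⁿ(u'(r)² + 2F(u(r))) + (n-2)r^{n-1}u(r)u'(r)`. -/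
noncomputable def P (n : ℕ) (ω p q : ℝ) (u u' : ℝ → ℝ) (r : ℝ) : ℝ :=
  r ^ (n : ℝ) * ((u' r) ^ 2 + 2 * F ω p q (u r)) +
    ((n : ℝ) - 2) * r ^ ((n : ℝ) - 1) * u r * u' r

/-- Pohozaev identity: if `u` is a positive twice differentiable solution of
`u'' + ((n-1)/r)u' + f(u) = 0` on `(0,∞)`, then `P` is differentiable on `(0,∞)`
with `P'(r) = r^{n-1} Σ(u(r))`. -/
theorem pohozaev_identity (p q ω : ℝ) (hp : 1 < p) (hpq : p < q) (hω : 0 < ω)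
    (n : ℕ) (hn : 1 ≤ n) (u u' u'' : ℝ → ℝ)
    (hu : ∀ r, 0 < r → HasDerivAt u (u' r) r)
    (hu' : ∀ r, 0 < r → HasDerivAt u' (u'' r) r)
    (hupos : ∀ r, 0 < r → 0 < u r)
    (hode : ∀ r, 0 < r → u'' r + ((n : ℝ) - 1) / r * u' r + f ω p q (u r) = 0) :
    ∀ r, 0 < r →
      HasDerivAt (P n ω p q u u') (r ^ ((n : ℝ) - 1) * Sig n ω p q (u r)) r := by
  intro r hr
  have hur := hupos r hr
  have hp1 : p + 1 ≠ 0 := by nlinarith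
  have hq1 : q + 1 ≠ 0 := by nlinarith
  -- derivative of F at u r
  have hF0 : HasDerivAt (fun y : ℝ => F ω p q y) (f ω p q (u r)) (u r) := by
    have h1 : HasDerivAt (fun y : ℝ => y ^ (p + 1)) ((p + 1) * (u r) ^ p) (u r) := by
      have := Real.hasDerivAt_rpow_const (x := u r) (p := p + 1) (Or.inl hur.ne')
      simpa using this
    have h2 : HasDerivAt (fun y : ℝ => y ^ (q + 1)) ((q + 1) * (u r) ^ q) (u r) := by
      have := Real.hasDerivAt_rpow_const (x := u r) (p := q + 1) (Or.inl hur.ne')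
      simpa using this
    have h3 : HasDerivAt (fun y : ℝ => y ^ 2) (2 * (u r) ^ 1) (u r) := by
      simpa using hasDerivAt_pow 2 (u r)
    have := ((h3.const_mul (-(ω / 2))).add (h1.div_const (p + 1))).sub
      (h2.div_const (q + 1))
    unfold F f
    refine this.congr_deriv ?_
    field_simp
  have hF : HasDerivAt (fun x => F ω p q (u x)) (f ω p q (u r) * u' r) r :=
    hF0.comp r (hu r hr)
  have hrn : HasDerivAt (fun x : ℝ => x ^ (n : ℝ)) ((n : ℝ) * r ^ ((n : ℝ) - 1)) r :=
    Real.hasDerivAt_rpow_const (Or.inl hr.ne')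
  have hrn1 : HasDerivAt (fun x : ℝ => x ^ ((n : ℝ) - 1))
      (((n : ℝ) - 1) * r ^ ((n : ℝ) - 2)) r := by
    have := Real.hasDerivAt_rpow_const (x := r) (p := (n : ℝ) - 1) (Or.inl hr.ne')
    convert this using 2
    ring
  have hsq : HasDerivAt (fun x => (u' x) ^ 2) (2 * (u' r) ^ 1 * u'' r) r :=
    (hu' r hr).pow 2
  have T1 := hrn.mul (hsq.add (hF.const_mul 2))
  have T2 := (((hrn1.const_mul ((n : ℝ) - 2)).mul (hu r hr)).mul (hu' r hr))
  have hP := T1.add T2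
  have hode' : u'' r = -(((n : ℝ) - 1) / r * u' r + f ω p q (u r)) := by
    have := hode r hr; linarith
  have e1 : r ^ (n : ℝ) = r ^ ((n : ℝ) - 2) * r ^ 2 := by
    rw [← Real.rpow_natCast r 2, ← Real.rpow_add hr]
    norm_num
  have e2 : r ^ ((n : ℝ) - 1) = r ^ ((n : ℝ) - 2) * r := by
    rw [show (n : ℝ) - 1 = ((n : ℝ) - 2) + 1 by ring, Real.rpow_add hr, Real.rpow_one]
  refine hP.congr_deriv ?_
  simp only [Pi.add_apply, Pi.mul_apply]
  unfold Sig
  rw [hode', e1, e2]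
  field_simp
  ring
end

section
/- Let n ≥ 1 be a natural number and let u : [0,∞) → ℝ be twice differentiable with u(r) > 0 for all r ≥ 0, strictly decreasing, satisfying u''(r) + ((n-1)/r) u'(r) + f(u(r)) = 0 for all r > 0, with u'(0) = 0, and such that P(r) = r^n (u'(r)² + 2F(u(r))) + (n-2) r^{n-1} u(r) u'(r) tends to 0 as r → ∞. Let B > 0 satisfy Σ(v) < 0 for all v ∈ (0,B). Then u(0) > B. -/
lemma hasDerivAt_F (p q ω : ℝ) (hp : 1 < p) (hpq : p < q) (v : ℝ) (hv : 0 < v) :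
    HasDerivAt (F ω p q) (f ω p q v) v := by
  have h1 : HasDerivAt (fun v : ℝ => -(ω / 2) * v ^ 2) (-(ω / 2) * (2 * v ^ 1)) v :=
    (hasDerivAt_pow 2 v).const_mul _
  have h2 : HasDerivAt (fun v : ℝ => v ^ (p + 1)) ((p + 1) * v ^ (p + 1 - 1)) v :=
    Real.hasDerivAt_rpow_const (Or.inl hv.ne')
  have h3 : HasDerivAt (fun v : ℝ => v ^ (q + 1)) ((q + 1) * v ^ (q + 1 - 1)) v :=
    Real.hasDerivAt_rpow_const (Or.inl hv.ne')
  have := (h1.add (h2.div_const (p + 1))).sub (h3.div_const (q + 1))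
  convert this using 1
  · rfl
  · rfl
  · rfl
  have hep : p + 1 - 1 = p := by ring
  have heq : q + 1 - 1 = q := by ring
  rw [hep, heq]
  unfold f
  have hp0 : p + 1 ≠ 0 := by linarith
  have hq0 : q + 1 ≠ 0 := by linarith
  field_simp

lemma hasDerivAt_P (p q ω : ℝ) (hp : 1 < p) (hpq : p < q)
    (n : ℕ) (u u' u'' : ℝ → ℝ)
    (hu : ∀ r, 0 ≤ r → HasDerivAt u (u' r) r)
    (hu' : ∀ r, 0 ≤ r → HasDerivAt u' (u'' r) r)
    (hupos : ∀ r, 0 ≤ r → 0 < u r)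
    (hode : ∀ r, 0 < r → u'' r + ((n : ℝ) - 1) / r * u' r + f ω p q (u r) = 0)
    (r : ℝ) (hr : 0 < r) :
    HasDerivAt (P n ω p q u u') (r ^ ((n : ℝ) - 1) * Sig n ω p q (u r)) r := by
  have hrn : HasDerivAt (fun x : ℝ => x ^ (n : ℝ)) ((n : ℝ) * r ^ ((n : ℝ) - 1)) r :=
    Real.hasDerivAt_rpow_const (Or.inl hr.ne')
  have hrn1 : HasDerivAt (fun x : ℝ => x ^ ((n : ℝ) - 1))
      (((n : ℝ) - 1) * r ^ ((n : ℝ) - 1 - 1)) r :=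
    Real.hasDerivAt_rpow_const (Or.inl hr.ne')
  have hF : HasDerivAt (fun x => F ω p q (u x)) (f ω p q (u r) * u' r) r :=
    (hasDerivAt_F p q ω hp hpq (u r) (hupos r hr.le)).comp r (hu r hr.le)
  have inner : HasDerivAt (fun x => (u' x) ^ 2 + 2 * F ω p q (u x))
      (2 * u' r ^ 1 * u'' r + 2 * (f ω p q (u r) * u' r)) r :=
    ((hu' r hr.le).pow 2).add (hF.const_mul 2)
  have term1 := hrn.mul inner
  have term2 := (((hrn1.const_mul ((n : ℝ) - 2)).mul (hu r hr.le)).mul (hu' r hr.le))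
  have total := term1.add term2
  have hfun : (P n ω p q u u') = fun x : ℝ =>
      (fun x : ℝ => x ^ (n : ℝ)) x * ((u' x) ^ 2 + 2 * F ω p q (u x)) +
      ((n : ℝ) - 2) * x ^ ((n : ℝ) - 1) * u x * u' x := rfl
  rw [hfun]
  convert total using 1
  · rfl
  · rfl
  · rfl
  have hode' : u'' r = -(((n : ℝ) - 1) / r * u' r + f ω p q (u r)) := by
    have := hode r hr; linarith
  have h1 : r ^ (n : ℝ) = r ^ ((n : ℝ) - 1) * r := by
    rw [show (n : ℝ) = ((n : ℝ) - 1) + 1 by ring, Real.rpow_add hr, Real.rpow_one]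
    norm_num
  have h2 : r ^ ((n : ℝ) - 1 - 1) = r ^ ((n : ℝ) - 1) / r := by
    rw [Real.rpow_sub hr, Real.rpow_one]
  rw [hode', h1, h2]
  simp only [Pi.mul_apply]
  unfold Sig
  field_simp
  ring

/-- Theorem 2: if `u` is a positive, strictly decreasing, twice differentiable solution
of `u'' + ((n-1)/r)u' + f(u) = 0` on `(0,∞)` with `u'(0) = 0` and `P(r) → 0` as
`r → ∞`, and `B > 0` satisfies `Σ < 0` on `(0,B)`, then `u(0) > B`. -/
theorem max_value_gt_B (p q ω : ℝ) (hp : 1 < p) (hpq : p < q) (hω : 0 < ω)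
    (n : ℕ) (hn : 1 ≤ n) (u u' u'' : ℝ → ℝ)
    (hu : ∀ r, 0 ≤ r → HasDerivAt u (u' r) r)
    (hu' : ∀ r, 0 ≤ r → HasDerivAt u' (u'' r) r)
    (hupos : ∀ r, 0 ≤ r → 0 < u r)
    (hdec : StrictAntiOn u (Set.Ici (0 : ℝ)))
    (hode : ∀ r, 0 < r → u'' r + ((n : ℝ) - 1) / r * u' r + f ω p q (u r) = 0)
    (hu'0 : u' 0 = 0)
    (hPlim : Filter.Tendsto (P n ω p q u u') Filter.atTop (nhds 0))
    (B : ℝ) (hB : 0 < B)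
    (hSig : ∀ v, 0 < v → v < B → Sig n ω p q v < 0) :
    B < u 0 := by
  by_contra hcon
  push_neg at hcon
  -- u 0 ≤ B
  -- P is strictly decreasing on (0,∞)
  have hderiv : ∀ r ∈ Set.Ioi (0 : ℝ),
      HasDerivAt (P n ω p q u u') (r ^ ((n : ℝ) - 1) * Sig n ω p q (u r)) r :=
    fun r hr => hasDerivAt_P p q ω hp hpq n u u' u'' hu hu' hupos hode r hr
  have hneg : ∀ r ∈ Set.Ioi (0 : ℝ), r ^ ((n : ℝ) - 1) * Sig n ω p q (u r) < 0 := by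
    intro r hr
    have hr' : (0 : ℝ) < r := hr
    have h1 : 0 < r ^ ((n : ℝ) - 1) := Real.rpow_pos_of_pos hr' _
    have h2 : u r < u 0 := hdec (Set.mem_Ici.mpr le_rfl) (Set.mem_Ici.mpr hr'.le) hr'
    have h3 : Sig n ω p q (u r) < 0 := hSig (u r) (hupos r hr'.le) (lt_of_lt_of_le h2 hcon)
    exact mul_neg_of_pos_of_neg h1 h3
  have hanti : StrictAntiOn (P n ω p q u u') (Set.Ioi (0 : ℝ)) := by
    apply strictAntiOn_of_deriv_neg (convex_Ioi 0)
    · exact fun r hr => ((hderiv r hr).continuousAt).continuousWithinAt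
    · intro r hr
      rw [interior_Ioi] at hr
      rw [(hderiv r hr).deriv]
      exact hneg r hr
  -- P tends to 0 as r → 0⁺
  have hcont0 : Filter.Tendsto (P n ω p q u u') (nhdsWithin 0 (Set.Ioi 0)) (nhds 0) := by
    have hc1 : ContinuousAt (fun r : ℝ => r ^ (n : ℝ)) 0 :=
      Real.continuousAt_rpow_const 0 _ (Or.inr (by positivity))
    have hc2 : ContinuousAt (fun r : ℝ => r ^ ((n : ℝ) - 1)) 0 :=
      Real.continuousAt_rpow_const 0 _ (Or.inr (by
        have : (1 : ℝ) ≤ (n : ℝ) := by exact_mod_cast hn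
        linarith))
    have hcu : ContinuousAt u 0 := (hu 0 le_rfl).continuousAt
    have hcu' : ContinuousAt u' 0 := (hu' 0 le_rfl).continuousAt
    have hcF : ContinuousAt (fun r => F ω p q (u r)) 0 :=
      ((hasDerivAt_F p q ω hp hpq (u 0) (hupos 0 le_rfl)).continuousAt).comp hcu
    have hcP : ContinuousAt (P n ω p q u u') 0 := by
      exact (hc1.mul ((hcu'.pow 2).add (hcF.const_mul 2))).add
        (((hc2.const_mul _).mul hcu).mul hcu')
    have hval : P n ω p q u u' 0 = 0 := by
      unfold P
      rw [hu'0, Real.zero_rpow (by positivity : (n : ℝ) ≠ 0)]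
      ring
    have := hcP.continuousWithinAt (s := Set.Ioi (0 : ℝ))
    rw [ContinuousWithinAt, hval] at this
    exact this
  -- P r ≤ 0 for r > 0
  have hPle : ∀ r : ℝ, 0 < r → P n ω p q u u' r ≤ 0 := by
    intro r hr
    refine ge_of_tendsto hcont0 ?_
    filter_upwards [Ioo_mem_nhdsGT_of_mem (Set.mem_Ico.mpr ⟨le_rfl, hr⟩)] with ε hε
    exact (hanti (Set.mem_Ioi.mpr hε.1) (Set.mem_Ioi.mpr hr) hε.2).le
  -- contradiction with P → 0 at ∞
  have h12 : P n ω p q u u' 2 < P n ω p q u u' 1 :=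
    hanti (Set.mem_Ioi.mpr one_pos) (Set.mem_Ioi.mpr two_pos) one_lt_two
  have hP2 : P n ω p q u u' 2 < 0 := lt_of_lt_of_le h12 (hPle 1 one_pos)
  have : (0 : ℝ) ≤ P n ω p q u u' 2 := by
    refine le_of_tendsto hPlim ?_
    filter_upwards [Filter.eventually_gt_atTop 2] with s hs
    exact (hanti (Set.mem_Ioi.mpr two_pos) (Set.mem_Ioi.mpr (lt_trans two_pos hs)) hs).le
  linarith
end

section
/- Let n ≥ 3 be a natural number and 0 < ω < ω_{p,q}. Let β be the smaller positive zero of F (so F < 0 on (0,β) and F > 0 on (β,θ) for the larger zero θ), and let B > 0 be such that Σ < 0 on (0,B) and Σ > 0 on (B,C) for some C ∈ (B,∞]. Then β < B. -/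
/-- The critical frequency `ω_{p,q}`. -/
noncomputable def omegaPQ (p q : ℝ) : ℝ :=
  (2 * (q - p) / ((p + 1) * (q - 1))) *
    (((p - 1) * (q + 1)) / ((p + 1) * (q - 1))) ^ ((p - 1) / (q - p))

open Real Filter Set

lemma Fexp (ω p q u : ℝ) (hu : 0 < u) :
    F ω p q u = u ^ 2 * (-(ω/2) + u ^ (p-1) / (p+1) - u ^ (q-1) / (q+1)) := by
  have h1 : u ^ (p+1) = u ^ (p-1) * u ^ 2 := by
    have h := Real.rpow_add hu (p-1) 2
    rw [show p - 1 + 2 = p + 1 by ring, Real.rpow_two] at h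
    exact h
  have h2 : u ^ (q+1) = u ^ (q-1) * u ^ 2 := by
    have h := Real.rpow_add hu (q-1) 2
    rw [show q - 1 + 2 = q + 1 by ring, Real.rpow_two] at h
    exact h
  unfold F; rw [h1, h2]; ring

lemma fexp (ω p q u : ℝ) (hu : 0 < u) :
    f ω p q u = u * (-ω + u ^ (p-1) - u ^ (q-1)) := by
  have h1 : u ^ p = u ^ (p-1) * u := by
    have h := Real.rpow_add hu (p-1) 1
    rw [show p - 1 + 1 = p by ring, Real.rpow_one] at h
    exact h
  have h2 : u ^ q = u ^ (q-1) * u := by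
    have h := Real.rpow_add hu (q-1) 1
    rw [show q - 1 + 1 = q by ring, Real.rpow_one] at h
    exact h
  unfold f; rw [h1, h2]; ring

lemma Sigexp (n : ℕ) (ω p q u : ℝ) (hu : 0 < u) :
    Sig n ω p q u = u ^ 2 *
      (2 * n * (-(ω/2) + u ^ (p-1) / (p+1) - u ^ (q-1) / (q+1))
        - ((n:ℝ) - 2) * (-ω + u ^ (p-1) - u ^ (q-1))) := by
  unfold Sig; rw [Fexp ω p q u hu, fexp ω p q u hu]; ring

/-- For `n ≥ 3` and `0 < ω < ω_{p,q}`: if `β` is the smaller positive zero of `F`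
(`F < 0` on `(0,β)`, `F > 0` on `(β,θ)` with larger zero `θ`) and `B > 0` satisfies
`Σ < 0` on `(0,B)` and `Σ > 0` on `(B,C)` for some `C ∈ (B,∞]`, then `β < B`. -/
theorem beta_lt_B (p q ω : ℝ) (hp : 1 < p) (hpq : p < q) (hω : 0 < ω)
    (n : ℕ) (hn : 3 ≤ n) (hωpq : ω < omegaPQ p q)
    (β θ : ℝ) (hβ : 0 < β) (hβθ : β < θ)
    (hF1 : ∀ u, 0 < u → u < β → F ω p q u < 0)
    (hFβ : F ω p q β = 0)
    (hF2 : ∀ u, β < u → u < θ → 0 < F ω p q u)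
    (hFθ : F ω p q θ = 0)
    (B : ℝ) (hB : 0 < B)
    (hSig1 : ∀ v, 0 < v → v < B → Sig n ω p q v < 0)
    (C : EReal) (hBC : (B : EReal) < C)
    (hSig2 : ∀ v : ℝ, B < v → (v : EReal) < C → 0 < Sig n ω p q v) :
    β < B := by
  have hp1 : (0:ℝ) < p + 1 := by linarith
  have hq1 : (0:ℝ) < q + 1 := by linarith
  have hpm1 : (0:ℝ) < p - 1 := by linarith
  have hqm1 : (0:ℝ) < q - 1 := by linarith
  have hqp : (0:ℝ) < q - p := by linarith
  have hn2 : (2:ℝ) < (n:ℝ) := by exact_mod_cast lt_of_lt_of_le (by norm_num) hn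
  have hn2' : (0:ℝ) < (n:ℝ) - 2 := by linarith
  -- the critical point s = r^(1/(q-p))
  set r : ℝ := ((p-1) * (q+1)) / ((p+1) * (q-1)) with hr_def
  have hr : 0 < r := by positivity
  set s : ℝ := r ^ ((1:ℝ)/(q-p)) with hs_def
  have hs : 0 < s := Real.rpow_pos_of_pos hr _
  have hs1 : s ^ (q - p) = r := by
    rw [hs_def, ← Real.rpow_mul hr.le, one_div_mul_cancel hqp.ne', Real.rpow_one]
  have hsp : s ^ (p - 1) = r ^ ((p-1)/(q-p)) := by
    rw [hs_def, ← Real.rpow_mul hr.le]; congr 1; field_simp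
  have hsq : s ^ (q - 1) = s ^ (p - 1) * r := by
    rw [← hs1, ← Real.rpow_add hs]; congr 1; ring
  have hX : 0 < s ^ (p - 1) := Real.rpow_pos_of_pos hs _
  -- F(s) > 0
  have hFs : 0 < F ω p q s := by
    have hkey : -(ω/2) + s ^ (p-1) / (p+1) - s ^ (q-1) / (q+1)
        = (omegaPQ p q - ω) / 2 := by
      rw [hsq, hsp]
      unfold omegaPQ
      rw [← hsp, hr_def]
      field_simp
      ring
    rw [Fexp ω p q s hs, hkey]
    have : 0 < omegaPQ p q - ω := by linarith
    positivity
  have hβs : β < s := by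
    rcases lt_trichotomy s β with h | h | h
    · exact absurd (hF1 s hs h) (by linarith)
    · exact absurd hFs (by rw [h, hFβ]; simp)
    · exact h
  -- Sig is continuous at B
  have hcont : ContinuousAt (Sig n ω p q) B := by
    unfold Sig F f
    have h1 : ∀ a : ℝ, ContinuousAt (fun u : ℝ => u ^ a) B :=
      fun a => Real.continuousAt_rpow_const _ _ (Or.inl hB.ne')
    exact (continuousAt_const.mul (((continuousAt_const.mul
      ((continuousAt_id.pow 2))).add ((h1 (p+1)).div_const _)).sub
      ((h1 (q+1)).div_const _))).sub
      (((continuousAt_const.mul continuousAt_id)).mul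
        (((continuousAt_const.mul continuousAt_id).add (h1 p)).sub (h1 q)))
  -- Sig B = 0
  have hSB : Sig n ω p q B = 0 := by
    have hle : Sig n ω p q B ≤ 0 := by
      refine le_of_tendsto (hcont.continuousWithinAt.tendsto (s := Iio B)) ?_
      filter_upwards [Ioo_mem_nhdsLT_of_mem (⟨hB, le_refl B⟩ : B ∈ Ioc 0 B)] with u hu
      exact le_of_lt (hSig1 u hu.1 hu.2)
    have hge : 0 ≤ Sig n ω p q B := by
      obtain ⟨c, hBc, hcC⟩ := EReal.lt_iff_exists_real_btwn.mp hBC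
      have hBc' : B < c := by exact_mod_cast hBc
      refine ge_of_tendsto (hcont.continuousWithinAt.tendsto (s := Ioi B)) ?_
      filter_upwards [Ioo_mem_nhdsGT_of_mem (⟨le_refl B, hBc'⟩ : B ∈ Ico B c)] with u hu
      exact le_of_lt (hSig2 u hu.1 (lt_trans (by exact_mod_cast hu.2) hcC))
    linarith
  set x : ℝ := B ^ (p - 1) with hx_def
  set y : ℝ := B ^ (q - 1) with hy_def
  have hx : 0 < x := Real.rpow_pos_of_pos hB _
  have hy : y = x * B ^ (q - p) := by
    rw [hx_def, hy_def, ← Real.rpow_add hB]; congr 1; ring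
  have hE : 2 * (n:ℝ) * (-(ω/2) + x/(p+1) - y/(q+1)) - ((n:ℝ) - 2) * (-ω + x - y) = 0 := by
    have h := hSB
    rw [Sigexp n ω p q B hB] at h
    have hB2 : (B:ℝ) ^ 2 ≠ 0 := by positivity
    exact (mul_eq_zero.mp h).resolve_left hB2
  by_cases hg : 0 ≤ -(ω/2) + x/(p+1) - y/(q+1)
  · -- F(B) ≥ 0, so β ≤ B; rule out β = B
    have hFB : 0 ≤ F ω p q B := by
      rw [Fexp ω p q B hB]; positivity
    have hβB : β ≤ B := by
      by_contra h
      exact absurd (hF1 B hB (lt_of_not_ge h)) (by linarith)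
    rcases lt_or_eq_of_le hβB with h | h
    · exact h
    · exfalso
      have hFB0 : F ω p q B = 0 := by rw [← h, hFβ]
      have hg0 : -(ω/2) + x/(p+1) - y/(q+1) = 0 := by
        rw [Fexp ω p q B hB] at hFB0
        have hB2 : (B:ℝ) ^ 2 ≠ 0 := by positivity
        exact (mul_eq_zero.mp hFB0).resolve_left hB2
      have hφ0 : -ω + x - y = 0 := by
        rw [hg0] at hE
        have hne : ((n:ℝ) - 2) ≠ 0 := by linarith
        simpa [hne] using hE
      have hg0' : -(ω/2)*((p+1)*(q+1)) + x*(q+1) - y*(p+1) = 0 := by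
        have hid : (-(ω/2) + x/(p+1) - y/(q+1)) * ((p+1)*(q+1))
            = -(ω/2)*((p+1)*(q+1)) + x*(q+1) - y*(p+1) := by
          field_simp
        rw [← hid, hg0, zero_mul]
      have hyr : y = x * r := by
        rw [hr_def]
        field_simp
        linear_combination 2*hg0' - ((p+1)*(q+1))*hφ0
      have hBqp : B ^ (q - p) = r := by
        exact mul_left_cancel₀ hx.ne' (hy.symm.trans hyr)
      have hBs : B = s := by
        rw [hs_def, ← hBqp, ← Real.rpow_mul hB.le, mul_one_div,
          div_self hqp.ne', Real.rpow_one]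
      rw [← h] at hBs
      linarith
  · -- g < 0 : then B > s
    push_neg at hg
    have hg2 : -(ω/2)*((p+1)*(q+1)) + x*(q+1) - y*(p+1) < 0 := by
      have hid : (-(ω/2) + x/(p+1) - y/(q+1)) * ((p+1)*(q+1))
          = -(ω/2)*((p+1)*(q+1)) + x*(q+1) - y*(p+1) := by
        field_simp
      have hprod := mul_neg_of_neg_of_pos hg (mul_pos hp1 hq1)
      linarith [hid ▸ hprod]
    have hE2 : 2*(n:ℝ)*(-(ω)*(p+1)*(q+1) + 2*x*(q+1) - 2*y*(p+1))
        - 2*((n:ℝ)-2)*(-ω + x - y)*((p+1)*(q+1)) = 0 := by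
      field_simp at hE
      linear_combination 2 * hE
    have hBg' : ((n:ℝ)-2) * ((p-1)*x*(q+1) - (q-1)*y*(p+1))
        = 4 * (-(ω/2)*((p+1)*(q+1)) + x*(q+1) - y*(p+1)) := by
      linear_combination (-(1:ℝ)/2) * hE2
    have hT : (p-1)*x*(q+1) - (q-1)*y*(p+1) < 0 := by
      have h6 : ((n:ℝ)-2) * ((p-1)*x*(q+1) - (q-1)*y*(p+1)) < 0 := by
        rw [hBg']; linarith
      by_contra hcon
      push_neg at hcon
      have := mul_nonneg hn2'.le hcon
      linarith
    have hrB : r < B ^ (q - p) := by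
      rw [hy] at hT
      have h3 : x * ((p-1)*(q+1)) < x * (B^(q-p) * ((p+1)*(q-1))) := by linarith [hT]
      have h4 := (mul_lt_mul_iff_right₀ hx).mp h3
      rw [hr_def, div_lt_iff₀ (by positivity)]
      linarith [h4]
    have hsB : s < B := by
      by_contra h
      push_neg at h
      have h5 := Real.rpow_le_rpow hB.le h hqp.le
      rw [hs1] at h5
      linarith
    linarith
end
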